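/- Let Z be a real random variable with mean μ and second moment v² = E Z² < ∞. Then for any τ > 0, E[exp(ψ_τ(Z)/τ)] ≤ exp(μ/τ + v²/τ²), where ψ_τ(u) = sign(u)·min(|u|,τ). -/
import Mathlib

open MeasureTheory

/-- Truncation operator ψ_τ(u) = sign(u)·min(|u|, τ). -/
noncomputable def psi (τ u : ℝ) : ℝ := Real.sign u * min |u| τ

lemma psi_eq (τ u : ℝ) (hτ : 0 < τ) : psi τ u = max (-τ) (min u τ) := by
  unfold psi
  rcases lt_trichotomy u 0 with h | h | h
  · rw [Real.sign_of_neg h, abs_of_neg h, neg_one_mul]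
    rcases le_total (-u) τ with h2 | h2
    · rw [min_eq_left h2, min_eq_left (by linarith : u ≤ τ),
        max_eq_right (by linarith : -τ ≤ u), neg_neg]
    · rw [min_eq_right h2, min_eq_left (by linarith : u ≤ τ),
        max_eq_left (by linarith : u ≤ -τ)]
  · simp [h, Real.sign_zero, le_of_lt hτ]
  · rw [Real.sign_of_pos h, abs_of_pos h, one_mul, max_eq_right]
    exact le_trans (by linarith) (le_min (le_of_lt h) (le_of_lt hτ) : (0:ℝ) ≤ min u τ)

lemma key (x : ℝ) : Real.exp (max (-1) (min x 1)) ≤ 1 + x + x ^ 2 := by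
  rcases le_total 1 x with h1 | h1
  · rw [min_eq_right h1, max_eq_right (by linarith)]
    have := Real.exp_one_lt_d9
    nlinarith
  rcases le_total x (-1) with h2 | h2
  · rw [min_eq_left (by linarith : x ≤ 1), max_eq_left h2, Real.exp_neg]
    have h3 : Real.exp 1 ≥ 1 := Real.one_le_exp zero_le_one
    have : (Real.exp 1)⁻¹ ≤ 1 := by
      rw [inv_le_one_iff₀]; right; exact h3
    nlinarith [sq_nonneg (x + 1)]
  · rw [min_eq_left h1, max_eq_right (by linarith)]
    have hb := Real.exp_bound (x := x) (abs_le.mpr ⟨h2, h1⟩) (n := 2) (by norm_num)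
    have hsum : ∑ i ∈ Finset.range 2, x ^ i / (Nat.factorial i) = 1 + x := by
      simp [Finset.sum_range_succ, Nat.factorial]
    rw [hsum] at hb
    have := abs_le.mp hb
    have hx2 : |x| ^ 2 = x ^ 2 := sq_abs x
    norm_num at this
    nlinarith [sq_abs x, sq_nonneg x]

theorem stmt3 {Ω : Type*} [MeasurableSpace Ω] (μ : Measure Ω) [IsProbabilityMeasure μ]
    (Z : Ω → ℝ) (hmeas : Measurable Z) (hint : Integrable Z μ)
    (hint2 : Integrable (fun ω => Z ω ^ 2) μ) (τ : ℝ) (hτ : 0 < τ) :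
    ∫ ω, Real.exp (psi τ (Z ω) / τ) ∂μ
      ≤ Real.exp ((∫ ω, Z ω ∂μ) / τ + (∫ ω, Z ω ^ 2 ∂μ) / τ ^ 2) := by
  have hτ' : τ ≠ 0 := ne_of_gt hτ
  have hpt : ∀ ω, Real.exp (psi τ (Z ω) / τ) ≤ 1 + Z ω / τ + Z ω ^ 2 / τ ^ 2 := by
    intro ω
    rw [psi_eq _ _ hτ]
    have : max (-τ) (min (Z ω) τ) / τ = max (-1) (min (Z ω / τ) 1) := by
      rw [div_eq_iff hτ', max_mul_of_nonneg _ _ (le_of_lt hτ),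
        min_mul_of_nonneg _ _ (le_of_lt hτ)]
      field_simp
    rw [this]
    have := key (Z ω / τ)
    calc Real.exp (max (-1) (min (Z ω / τ) 1)) ≤ 1 + Z ω / τ + (Z ω / τ) ^ 2 := this
    _ = 1 + Z ω / τ + Z ω ^ 2 / τ ^ 2 := by rw [div_pow]
  have hg : Integrable (fun ω => 1 + Z ω / τ + Z ω ^ 2 / τ ^ 2) μ :=
    ((integrable_const 1).add (hint.div_const τ)).add (hint2.div_const (τ ^ 2))
  have hf : Integrable (fun ω => Real.exp (psi τ (Z ω) / τ)) μ := by
    apply hg.mono'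
    · apply Measurable.aestronglyMeasurable
      apply Real.measurable_exp.comp
      apply Measurable.div_const
      have : (fun ω => psi τ (Z ω)) = fun ω => max (-τ) (min (Z ω) τ) := by
        funext ω; exact psi_eq _ _ hτ
      rw [this]
      exact measurable_const.max (hmeas.min measurable_const)
    · filter_upwards with ω
      rw [Real.norm_eq_abs, abs_of_pos (Real.exp_pos _)]
      exact hpt ω
  calc ∫ ω, Real.exp (psi τ (Z ω) / τ) ∂μ
      ≤ ∫ ω, (1 + Z ω / τ + Z ω ^ 2 / τ ^ 2) ∂μ :=
        integral_mono hf hg hpt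
    _ = 1 + (∫ ω, Z ω ∂μ) / τ + (∫ ω, Z ω ^ 2 ∂μ) / τ ^ 2 := by
        have e1 : ∫ ω, (1 + Z ω / τ + Z ω ^ 2 / τ ^ 2) ∂μ
            = (∫ ω, (1 + Z ω / τ) ∂μ) + ∫ ω, Z ω ^ 2 / τ ^ 2 ∂μ :=
          integral_add ((integrable_const 1).add (hint.div_const τ)) (hint2.div_const _)
        have e2 : ∫ ω, (1 + Z ω / τ) ∂μ = (∫ ω, (1:ℝ) ∂μ) + ∫ ω, Z ω / τ ∂μ :=
          integral_add (integrable_const 1) (hint.div_const τ)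
        rw [e1, e2, integral_const, integral_div, integral_div]
        simp
    _ ≤ Real.exp ((∫ ω, Z ω ∂μ) / τ + (∫ ω, Z ω ^ 2 ∂μ) / τ ^ 2) := by
        have := Real.add_one_le_exp ((∫ ω, Z ω ∂μ) / τ + (∫ ω, Z ω ^ 2 ∂μ) / τ ^ 2)
        linarith
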